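/- Every nonempty perfect matching diagram π is •-primitive: there do not exist nonempty partition diagrams ρ⁽¹⁾ and ρ⁽²⁾ with π = ρ⁽¹⁾ • ρ⁽²⁾. -/
import Mathlib


open Finset

/-- A partition diagram of order `k`: a set partition (equivalence relation) on the
`2k`-element set `Fin k × Bool`, where `(i, true)` denotes the top node `i+1` and
`(i, false)` denotes the bottom node `(i+1)'`. -/
abbrev DiagramOn (k : ℕ) := Setoid (Fin k × Bool)

/-- A partition diagram of arbitrary order. -/
abbrev Diagram := Σ k : ℕ, DiagramOn k

/-- The disjoint sum of two set partitions. -/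
def sumSetoid {α β : Type*} (s : Setoid α) (t : Setoid β) : Setoid (α ⊕ β) where
  r x y :=
    match x, y with
    | .inl a, .inl b => s.r a b
    | .inr a, .inr b => t.r a b
    | _, _ => False
  iseqv := by
    refine ⟨?_, ?_, ?_⟩
    · rintro (a | a)
      · exact s.iseqv.refl a
      · exact t.iseqv.refl a
    · rintro (a | a) (b | b) h
      · exact s.iseqv.symm h
      · exact h.elim
      · exact h.elim
      · exact t.iseqv.symm h
    · rintro (a | a) (b | b) (c | c) h₁ h₂ <;>
        first
          | exact s.iseqv.trans h₁ h₂
          | exact t.iseqv.trans h₁ h₂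
          | exact h₁.elim
          | exact h₂.elim

/-- The relabeling identifying the nodes of two concatenated diagrams of orders `j`, `m`
with the nodes of a diagram of order `j + m`. -/
def concatEquiv (j m : ℕ) : (Fin j × Bool) ⊕ (Fin m × Bool) ≃ Fin (j + m) × Bool :=
  (Equiv.sumProdDistrib (Fin j) (Fin m) Bool).symm.trans
    (Equiv.prodCongr finSumFinEquiv (Equiv.refl Bool))

/-- Horizontal concatenation of partition diagrams. -/
def concatOn {j m : ℕ} (s : DiagramOn j) (t : DiagramOn m) : DiagramOn (j + m) :=
  Setoid.comap (concatEquiv j m).symm (sumSetoid s t)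

/-- Horizontal concatenation `⊗` of diagrams of arbitrary orders. -/
def Diagram.concat (d₁ d₂ : Diagram) : Diagram :=
  ⟨d₁.1 + d₂.1, concatOn d₁.2 d₂.2⟩

/-- A nonempty diagram is `⊗`-irreducible if it is not the concatenation of two
nonempty diagrams. -/
def Diagram.Irr (d : Diagram) : Prop :=
  d.1 ≠ 0 ∧ ¬ ∃ d₁ d₂ : Diagram, d₁.1 ≠ 0 ∧ d₂.1 ≠ 0 ∧ d = d₁.concat d₂

/-- The Bell number: the number of set partitions of an `m`-element set. -/
noncomputable def bell (m : ℕ) : ℕ := Nat.card (Setoid (Fin m))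

/-- The smallest equivalence relation containing `s` and relating `a` with `b`
(merging the blocks of `a` and `b`). -/
def joinTwo {X : Type*} (s : Setoid X) (a b : X) : Setoid X :=
  s ⊔ Relation.EqvGen.setoid (fun x y => x = a ∧ y = b)

/-- The near-concatenation `•` of partition diagrams: concatenate, then merge the block
of the bottom-right node of the first diagram with the block of the bottom-left node of
the second diagram.  By convention `∅ • ρ = ρ` and `π • ∅ = π`. -/
def Diagram.bullet (d₁ d₂ : Diagram) : Diagram :=
  if h₁ : d₁.1 = 0 then d₂
  else if h₂ : d₂.1 = 0 then d₁
  else ⟨d₁.1 + d₂.1,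
    joinTwo (concatOn d₁.2 d₂.2)
      (⟨d₁.1 - 1, by omega⟩, false) (⟨d₁.1, by omega⟩, false)⟩

/-- The `⊗`-product of a list of diagrams (empty diagram for the empty list). -/
def Diagram.listConcat : List Diagram → Diagram
  | [] => ⟨0, ⊥⟩
  | d :: l => l.foldl Diagram.concat d

/-- The `•`-product of a list of diagrams (empty diagram for the empty list). -/
def Diagram.listBullet : List Diagram → Diagram
  | [] => ⟨0, ⊥⟩
  | d :: l => l.foldl Diagram.bullet d

/-- The number of `⊗`-irreducible partition diagrams of order `k`. -/
noncomputable def irrCount (k : ℕ) : ℕ := Nat.card {s : DiagramOn k // Diagram.Irr ⟨k, s⟩}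

/-- A perfect matching: a partition diagram in which every block has size exactly two. -/
def IsPerfectMatching {k : ℕ} (s : DiagramOn k) : Prop :=
  ∀ x : Fin k × Bool, ({y | s.r x y} : Set (Fin k × Bool)).ncard = 2


section Aux

open Finset

/-- A finset with a fixed-point-free involution has even cardinality. -/
lemma even_card_of_fpf_invol {α : Type*} [DecidableEq α] (s : Finset α) (f : α → α)
    (hmem : ∀ x ∈ s, f x ∈ s) (hinv : ∀ x ∈ s, f (f x) = x) (hne : ∀ x ∈ s, f x ≠ x) :
    Even s.card := by
  induction s using Finset.strongInduction with
  | _ s ih =>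
    rcases s.eq_empty_or_nonempty with rfl | ⟨x, hx⟩
    · simp
    · have hfx : f x ∈ s := hmem x hx
      have hfxx : f x ≠ x := hne x hx
      set s' := (s.erase x).erase (f x) with hs'
      have hsub : s' ⊂ s := by
        refine Finset.ssubset_of_subset_of_ssubset ?_ (Finset.erase_ssubset hx)
        exact Finset.erase_subset _ _
      have hmem' : ∀ y ∈ s', y ∈ s ∧ y ≠ x ∧ y ≠ f x := by
        intro y hy
        simp only [hs', Finset.mem_erase] at hy
        exact ⟨hy.2.2, hy.2.1, hy.1⟩
      have h1 : ∀ y ∈ s', f y ∈ s' := by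
        intro y hy
        obtain ⟨hys, hyx, hyfx⟩ := hmem' y hy
        simp only [hs', Finset.mem_erase]
        refine ⟨?_, ?_, hmem y hys⟩
        · intro h; exact hyx (by rw [← hinv y hys, h, hinv x hx])
        · intro h; exact hyfx (by rw [← hinv y hys, h])
      have h2 : ∀ y ∈ s', f (f y) = y := fun y hy => hinv y (hmem' y hy).1
      have h3 : ∀ y ∈ s', f y ≠ y := fun y hy => hne y (hmem' y hy).1
      have heven := ih s' hsub h1 h2 h3
      have hcard : s.card = s'.card + 2 := by
        have h1 : (s.erase x).card = s.card - 1 := Finset.card_erase_of_mem hx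
        have h2 : s'.card = (s.erase x).card - 1 :=
          Finset.card_erase_of_mem (Finset.mem_erase.mpr ⟨hfxx, hfx⟩)
        have hpos : 0 < s.card := Finset.card_pos.mpr ⟨x, hx⟩
        have hpos2 : 2 ≤ s.card :=
          Finset.one_lt_card.mpr ⟨x, hx, f x, hfx, fun h => hfxx h.symm⟩
        omega
      rw [hcard]
      exact heven.add even_two

/-- Characterization of the relation `joinTwo s a b`. -/
lemma joinTwo_iff {X : Type*} (s : Setoid X) (a b x y : X) :
    (joinTwo s a b).r x y ↔ s.r x y ∨ (s.r x a ∧ s.r b y) ∨ (s.r x b ∧ s.r a y) := by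
  constructor
  · intro h
    let R : Setoid X :=
      { r := fun x y => s.r x y ∨ (s.r x a ∧ s.r b y) ∨ (s.r x b ∧ s.r a y)
        iseqv := by
          refine ⟨fun x => Or.inl (s.refl' x), ?_, ?_⟩
          · rintro x y (h | ⟨h1, h2⟩ | ⟨h1, h2⟩)
            · exact Or.inl (s.symm' h)
            · exact Or.inr (Or.inr ⟨s.symm' h2, s.symm' h1⟩)
            · exact Or.inr (Or.inl ⟨s.symm' h2, s.symm' h1⟩)
          · rintro x y z (h | ⟨h1, h2⟩ | ⟨h1, h2⟩) (g | ⟨g1, g2⟩ | ⟨g1, g2⟩)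
            · exact Or.inl (s.trans' h g)
            · exact Or.inr (Or.inl ⟨s.trans' h g1, g2⟩)
            · exact Or.inr (Or.inr ⟨s.trans' h g1, g2⟩)
            · exact Or.inr (Or.inl ⟨h1, s.trans' h2 g⟩)
            · exact Or.inl (s.trans' h1 (s.trans' (s.symm' (s.trans' h2 g1)) g2))
            · exact Or.inl (s.trans' h1 g2)
            · exact Or.inr (Or.inr ⟨h1, s.trans' h2 g⟩)
            · exact Or.inl (s.trans' h1 g2)
            · exact Or.inl (s.trans' h1 (s.trans' (s.symm' (s.trans' h2 g1)) g2)) }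
    have hle : joinTwo s a b ≤ R := by
      refine sup_le ?_ (Setoid.eqvGen_le ?_)
      · intro u v huv
        exact Or.inl huv
      · rintro u v ⟨rfl, rfl⟩
        exact Or.inr (Or.inl ⟨s.refl' u, s.refl' v⟩)
    exact hle h
  · have hs : s ≤ joinTwo s a b := le_sup_left
    have hab : (joinTwo s a b).r a b := by
      have : Relation.EqvGen.setoid (fun x y => x = a ∧ y = b) ≤ joinTwo s a b := le_sup_right
      exact this (Relation.EqvGen.rel a b ⟨rfl, rfl⟩)
    rintro (h | ⟨h1, h2⟩ | ⟨h1, h2⟩)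
    · exact hs h
    · exact (joinTwo s a b).trans' (hs h1) ((joinTwo s a b).trans' hab (hs h2))
    · exact (joinTwo s a b).trans' (hs h1)
        ((joinTwo s a b).trans' ((joinTwo s a b).symm' hab) (hs h2))

/-- Concatenation preserves sides. -/
lemma finSumFinEquiv_symm_isLeft {j m : ℕ} (i : Fin (j + m)) :
    (finSumFinEquiv.symm i).isLeft = true ↔ i.val < j := by
  induction i using Fin.addCases with
  | left i => simp [finSumFinEquiv_symm_apply_castAdd, i.isLt]
  | right i => simp [finSumFinEquiv_symm_apply_natAdd]

lemma concat_side {j m : ℕ} (s : DiagramOn j) (t : DiagramOn m)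
    {x y : Fin (j + m) × Bool} (h : (concatOn s t).r x y) (hx : x.1.val < j) :
    y.1.val < j := by
  by_contra hy
  have h' : (sumSetoid s t).r
      ((Equiv.sumProdDistrib (Fin j) (Fin m) Bool) (finSumFinEquiv.symm x.1, x.2))
      ((Equiv.sumProdDistrib (Fin j) (Fin m) Bool) (finSumFinEquiv.symm y.1, y.2)) := h
  rcases hX : finSumFinEquiv.symm x.1 with u | u
  · rcases hY : finSumFinEquiv.symm y.1 with v | v
    · exact hy ((finSumFinEquiv_symm_isLeft y.1).mp (by rw [hY]; rfl))
    · rw [hX, hY] at h'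
      exact h'
  · have := (finSumFinEquiv_symm_isLeft x.1).mpr hx
    rw [hX] at this
    simp at this

end Aux

section Main

lemma pm_not_joinTwo {j m : ℕ} (hj : j ≠ 0) (hm : m ≠ 0) (s : DiagramOn j) (t : DiagramOn m)
    (hja : j - 1 < j + m) (hjb : j < j + m) :
    ¬ IsPerfectMatching (joinTwo (concatOn s t) ((⟨j - 1, hja⟩ : Fin (j + m)), false)
      ((⟨j, hjb⟩ : Fin (j + m)), false)) := by
  intro hpm
  classical
  set a : Fin (j + m) × Bool := ((⟨j - 1, hja⟩ : Fin (j + m)), false) with ha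
  set b : Fin (j + m) × Bool := ((⟨j, hjb⟩ : Fin (j + m)), false) with hb
  set C := concatOn s t with hC
  set π := joinTwo C a b with hπ
  have hCle : ∀ {x y}, C.r x y → π.r x y := fun {x y} h =>
    Setoid.le_def.mp (le_sup_left : C ≤ π) h
  have hab : π.r a b := (joinTwo_iff C a b a b).mpr (Or.inr (Or.inl ⟨C.refl' a, C.refl' b⟩))
  have haneb : a ≠ b := by
    intro h
    have := congrArg (fun z : Fin (j + m) × Bool => z.1.val) h
    simp only [ha, hb] at this
    omega
  have key : ∀ x, ∃ y, y ≠ x ∧ π.r x y ∧ ∀ z, π.r x z → z = x ∨ z = y := by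
    intro x
    obtain ⟨u, v, huv, hset⟩ := Set.ncard_eq_two.mp (hpm x)
    have hxmem : x ∈ ({y | π.r x y} : Set _) := π.refl' x
    rw [hset] at hxmem
    simp only [Set.mem_insert_iff, Set.mem_singleton_iff] at hxmem
    rcases hxmem with rfl | rfl
    · refine ⟨v, Ne.symm huv, ?_, ?_⟩
      · have hv : v ∈ ({x, v} : Set _) := by simp
        rw [← hset] at hv
        exact hv
      · intro z hz
        have : z ∈ ({x, v} : Set _) := by rw [← hset]; exact hz
        simpa using this
    · refine ⟨u, huv, ?_, ?_⟩
      · have hu : u ∈ ({u, x} : Set _) := by simp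
        rw [← hset] at hu
        exact hu
      · intro z hz
        have : z ∈ ({u, x} : Set _) := by rw [← hset]; exact hz
        exact (by simpa using this : z = u ∨ z = x).symm
  choose p hp1 hp2 hp3 using key
  have hclassa : ∀ z, π.r a z → z = a ∨ z = b := by
    intro z hz
    rcases hp3 a b hab with h | h
    · exact absurd h haneb.symm
    · rcases hp3 a z hz with h1 | h2
      · exact Or.inl h1
      · exact Or.inr (h2.trans h.symm)
  have hnab : ∀ x : Fin (j + m) × Bool, x.1.val < j → x ≠ a → ¬ π.r a x := by
    intro x hx hxa hr
    rcases hclassa x hr with h | h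
    · exact hxa h
    · rw [h] at hx
      simp only [hb] at hx
      omega
  have hparr : ∀ x : Fin (j + m) × Bool, x.1.val < j → x ≠ a →
      (p x).1.val < j ∧ p x ≠ a := by
    intro x hx hxa
    have hca : ¬ C.r x a := fun h => hnab x hx hxa (π.symm' (hCle h))
    have hcb : ¬ C.r x b := fun h =>
      hnab x hx hxa (π.trans' hab (π.symm' (hCle h)))
    have hCx : C.r x (p x) := by
      rcases (joinTwo_iff C a b x (p x)).mp (hp2 x) with h | ⟨h1, _⟩ | ⟨h1, _⟩
      · exact h
      · exact absurd h1 hca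
      · exact absurd h1 hcb
    refine ⟨concat_side s t hCx hx, ?_⟩
    intro h
    have := hp2 x
    rw [h] at this
    exact hnab x hx hxa (π.symm' this)
  set F : Finset (Fin (j + m) × Bool) := Finset.univ.filter (fun x => x.1.val < j) with hF
  have haF : a ∈ F := by
    simp only [hF, Finset.mem_filter, Finset.mem_univ, true_and, ha]
    omega
  have hevenF : Even F.card := by
    refine even_card_of_fpf_invol F (fun x => (x.1, !x.2)) ?_ ?_ ?_
    · intro x hx
      simp only [hF, Finset.mem_filter, Finset.mem_univ, true_and] at hx ⊢
      exact hx
    · intro x _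
      simp
    · intro x _
      simp [Prod.ext_iff]
  set L := F.erase a with hL
  have hmemL : ∀ x ∈ L, x.1.val < j ∧ x ≠ a := by
    intro x hxL
    rw [hL, Finset.mem_erase] at hxL
    refine ⟨?_, hxL.1⟩
    have := hxL.2
    simp only [hF, Finset.mem_filter, Finset.mem_univ, true_and] at this
    exact this
  have hevenL : Even L.card := by
    refine even_card_of_fpf_invol L p ?_ ?_ ?_
    · intro x hxL
      obtain ⟨hx, hxa⟩ := hmemL x hxL
      obtain ⟨h1, h2⟩ := hparr x hx hxa
      rw [hL, Finset.mem_erase]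
      exact ⟨h2, by simp only [hF, Finset.mem_filter, Finset.mem_univ, true_and]; exact h1⟩
    · intro x _
      rcases hp3 (p x) x (π.symm' (hp2 x)) with h | h
      · exact absurd h.symm (hp1 x)
      · exact h.symm
    · intro x _
      exact hp1 x
  have hcardL : L.card = F.card - 1 := Finset.card_erase_of_mem haF
  have hFpos : 0 < F.card := Finset.card_pos.mpr ⟨a, haF⟩
  rcases hevenF with ⟨c, hc⟩
  rcases hevenL with ⟨d, hd⟩
  omega

end Main

/-- Every nonempty perfect matching diagram is `•`-primitive. -/
theorem perfectMatching_bullet_primitive (π : Diagram) (hπ : π.1 ≠ 0)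
    (hpm : IsPerfectMatching π.2) :
    ¬ ∃ ρ₁ ρ₂ : Diagram, ρ₁.1 ≠ 0 ∧ ρ₂.1 ≠ 0 ∧ π = ρ₁.bullet ρ₂ := by
  rintro ⟨ρ₁, ρ₂, h₁, h₂, heq⟩
  rw [heq] at hpm
  rw [Diagram.bullet] at hpm
  rw [dif_neg h₁] at hpm
  rw [dif_neg h₂] at hpm
  exact pm_not_joinTwo h₁ h₂ ρ₁.2 ρ₂.2 (by omega) (by omega) hpm
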